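/- Let $S = K[x_1,\ldots,x_n]$ and let $I \subset S$ be an $\mathfrak{m}$-primary stable monomial ideal. For $j > 0$, the multiplication map $\mu_j : (S/I)_{j-1} \to (S/I)_j$, $f \mapsto x_n f$, is surjective if and only if $(x_1,\ldots,x_{n-1})^j \subseteq I$. -/

import Mathlib

open MvPolynomial

variable {K : Type*} [Field K] {n : ℕ}

/-- The total degree of an exponent vector. -/
def mdeg {n : ℕ} (m : Fin n →₀ ℕ) : ℕ := m.sum fun _ e => e

/-- `I` is a monomial ideal: it contains every monomial of each of its elements. -/
def IsMonomialIdeal (I : Ideal (MvPolynomial (Fin n) K)) : Prop :=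
  ∀ f ∈ I, ∀ m ∈ f.support, (monomial m (1 : K)) ∈ I

/-- `I` is stable: for every monomial `u ∈ I` with largest dividing variable `x_k`,
and every `i ≤ k`, the monomial `(x_i / x_k) * u` lies in `I`. -/
def IsStableIdeal (I : Ideal (MvPolynomial (Fin n) K)) : Prop :=
  ∀ m : Fin n →₀ ℕ, (monomial m (1 : K)) ∈ I →
    ∀ k i : Fin n, m k ≠ 0 → (∀ k', k < k' → m k' = 0) → i ≤ k →
      (monomial (m + Finsupp.single i 1 - Finsupp.single k 1) (1 : K)) ∈ I

/-- `I` is strongly stable: for every monomial `u ∈ I`, every variable `x_k` dividing `u`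
and every `i ≤ k`, the monomial `(x_i / x_k) * u` lies in `I`. -/
def IsStronglyStableIdeal (I : Ideal (MvPolynomial (Fin n) K)) : Prop :=
  ∀ m : Fin n →₀ ℕ, (monomial m (1 : K)) ∈ I →
    ∀ k i : Fin n, m k ≠ 0 → i ≤ k →
      (monomial (m + Finsupp.single i 1 - Finsupp.single k 1) (1 : K)) ∈ I

/-- `v <_lex u` for exponent vectors, lex order with `x_1 > x_2 > ⋯ > x_n`. -/
def lexLt {n : ℕ} (v u : Fin n →₀ ℕ) : Prop :=
  ∃ i : Fin n, (∀ j < i, v j = u j) ∧ v i < u i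

/-- `I` is a lexsegment ideal. -/
def IsLexsegmentIdeal (I : Ideal (MvPolynomial (Fin n) K)) : Prop :=
  IsMonomialIdeal I ∧
    ∀ u v : Fin n →₀ ℕ, (monomial u (1 : K)) ∈ I → mdeg v = mdeg u → lexLt u v →
      (monomial v (1 : K)) ∈ I

/-- The degree `j` piece of `S/I`, as the image of the degree `j` homogeneous polynomials. -/
noncomputable def Qpiece (I : Ideal (MvPolynomial (Fin n) K)) (j : ℕ) :
    Submodule K (MvPolynomial (Fin n) K ⧸ I) :=
  (homogeneousSubmodule (Fin n) K j).map (Ideal.Quotient.mkₐ K I).toLinearMap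

/-- Multiplication by `g` maps `(S/I)_j` injectively (to `(S/I)_{j'}`). -/
def QInj (I : Ideal (MvPolynomial (Fin n) K)) (g : MvPolynomial (Fin n) K)
    (j _j' : ℕ) : Prop :=
  ∀ f₁ ∈ Qpiece I j, ∀ f₂ ∈ Qpiece I j,
    Ideal.Quotient.mk I g * f₁ = Ideal.Quotient.mk I g * f₂ → f₁ = f₂

/-- Multiplication by `g` maps `(S/I)_j` onto `(S/I)_{j'}`. -/
def QSurj (I : Ideal (MvPolynomial (Fin n) K)) (g : MvPolynomial (Fin n) K)
    (j j' : ℕ) : Prop :=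
  ∀ h ∈ Qpiece I j', ∃ f ∈ Qpiece I j, Ideal.Quotient.mk I g * f = h

/-- Multiplication by `g` from `(S/I)_j` to `(S/I)_{j'}` has maximal rank. -/
def MulMaxRank (I : Ideal (MvPolynomial (Fin n) K)) (g : MvPolynomial (Fin n) K)
    (j j' : ℕ) : Prop :=
  QInj I g j j' ∨ QSurj I g j j'

lemma mdeg_eq_degree (m : Fin n →₀ ℕ) : mdeg m = m.degree := rfl

lemma mdeg_add (a b : Fin n →₀ ℕ) : mdeg (a + b) = mdeg a + mdeg b :=
  Finsupp.sum_add_index' (fun _ => rfl) (fun _ _ _ => rfl)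

lemma mdeg_single (i : Fin n) : mdeg (Finsupp.single i 1) = 1 :=
  Finsupp.sum_single_index rfl

lemma Mset_span (hn : 1 ≤ n) (j : ℕ) :
    (Ideal.span ((fun i : Fin n => (X i : MvPolynomial (Fin n) K)) ''
        {i : Fin n | (i : ℕ) < n - 1})) ^ j
    = Ideal.span {p : MvPolynomial (Fin n) K |
        ∃ u : Fin n →₀ ℕ, mdeg u = j ∧ u ⟨n - 1, by omega⟩ = 0 ∧ p = monomial u 1} := by
  induction j with
  | zero =>
    rw [pow_zero, Ideal.one_eq_top, eq_comm, Ideal.eq_top_iff_one]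
    exact Ideal.subset_span ⟨0, rfl, rfl, by simp⟩
  | succ j ih =>
    rw [pow_succ, ih, Ideal.span_mul_span]
    congr 1
    ext p
    simp only [Set.mem_iUnion, Set.mem_setOf_eq, Set.mem_image, Set.mem_singleton_iff]
    constructor
    · rintro ⟨s, ⟨u, hu, huz, rfl⟩, t, ⟨⟨i, hi, rfl⟩, rfl⟩⟩
      refine ⟨u + Finsupp.single i 1, by rw [mdeg_add, mdeg_single, hu], ?_, ?_⟩
      · have : i ≠ (⟨n - 1, by omega⟩ : Fin n) := by
          intro h; have h' : (i : ℕ) = n - 1 := congrArg Fin.val h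
          have hi' : (i : ℕ) < n - 1 := hi; omega
        simp [Finsupp.single_apply, this, huz]
      · beta_reduce; simp only [X, monomial_mul, mul_one]
    · rintro ⟨u, hu, huz, rfl⟩
      have hne : u ≠ 0 := by
        intro h; rw [h] at hu; simp [mdeg] at hu
      obtain ⟨i, hi⟩ : ∃ i, u i ≠ 0 := by
        by_contra h; push_neg at h; exact hne (Finsupp.ext h)
      have hile : Finsupp.single i 1 ≤ u := Finsupp.single_le_iff.2 (by omega)
      have hisum : u - Finsupp.single i 1 + Finsupp.single i 1 = u :=
        tsub_add_cancel_of_le hile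
      have hiz : (i : ℕ) < n - 1 := by
        have h1 : (i : ℕ) < n := i.isLt
        have h2 : (i : ℕ) ≠ n - 1 := by
          intro h; apply hi; rw [← huz]; congr 1; exact Fin.ext h
        omega
      refine ⟨monomial (u - Finsupp.single i 1) 1, ⟨u - Finsupp.single i 1, ?_, ?_, rfl⟩,
        X i, ⟨⟨i, hiz, rfl⟩, ?_⟩⟩
      · have := congrArg mdeg hisum
        rw [mdeg_add, mdeg_single, hu] at this; omega
      · have : (⟨n - 1, by omega⟩ : Fin n) ≠ i := by
          intro h; apply hi; rw [← huz]; congr 1; exact h.symm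
        rw [Finsupp.tsub_apply, huz, Finsupp.single_apply, if_neg (fun h => this h.symm)]; rfl
      · beta_reduce; simp only [X, monomial_mul, mul_one, hisum]

/-- For an `𝔪`-primary stable monomial ideal and `j > 0`, multiplication by `x_n` from
`(S/I)_{j-1}` onto `(S/I)_j` is surjective iff `(x_1,…,x_{n-1})^j ⊆ I`. -/
theorem stmt_2 (hn : 1 ≤ n) (I : Ideal (MvPolynomial (Fin n) K))
    (hmon : IsMonomialIdeal I) (hst : IsStableIdeal I)
    (hfd : FiniteDimensional K (MvPolynomial (Fin n) K ⧸ I))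
    (j : ℕ) (hj : 0 < j) :
    QSurj I (X (⟨n - 1, by omega⟩ : Fin n)) (j - 1) j ↔
      (Ideal.span ((fun i : Fin n => (X i : MvPolynomial (Fin n) K)) ''
          {i : Fin n | (i : ℕ) < n - 1})) ^ j ≤ I := by
  obtain ⟨j, rfl⟩ : ∃ k, j = k + 1 := ⟨j - 1, by omega⟩
  rw [Mset_span hn]
  simp only [Nat.add_sub_cancel]
  constructor
  · intro hsurj
    rw [Ideal.span_le]
    rintro p ⟨u, hu, huz, rfl⟩
    have hmem : (Ideal.Quotient.mk I) (monomial u (1 : K)) ∈ Qpiece I (j + 1) :=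
      ⟨monomial u 1, (mem_homogeneousSubmodule _ _).2
        (isHomogeneous_monomial 1 ((mdeg_eq_degree u) ▸ hu)), by
          simp [Ideal.Quotient.mkₐ_eq_mk]⟩
    obtain ⟨f, ⟨q, hq, rfl⟩, hgf⟩ := hsurj _ hmem
    rw [AlgHom.toLinearMap_apply, Ideal.Quotient.mkₐ_eq_mk, ← map_mul,
      Ideal.Quotient.eq] at hgf
    have hco : coeff u (X (⟨n - 1, by omega⟩ : Fin n) * q - monomial u (1 : K)) = -1 := by
      rw [coeff_sub, coeff_X_mul', if_neg (by simp [Finsupp.mem_support_iff, huz]),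
        coeff_monomial, if_pos rfl]
      ring
    exact hmon _ hgf u (mem_support_iff.2 (by rw [hco]; norm_num))
  · intro hI
    rintro h ⟨f, hf, rfl⟩
    replace hf : f.IsHomogeneous (j + 1) := hf
    have key : ∀ u ∈ f.support, ∃ g ∈ Qpiece I j,
        Ideal.Quotient.mk I (X (⟨n - 1, by omega⟩ : Fin n)) * g
          = Ideal.Quotient.mk I (monomial u (coeff u f)) := by
      intro u hu
      have hud : mdeg u = j + 1 := by
        rw [mdeg_eq_degree, Finsupp.degree_eq_weight_one]
        exact hf (mem_support_iff.1 hu)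
      by_cases hz : u ⟨n - 1, by omega⟩ = 0
      · refine ⟨0, Submodule.zero_mem _, ?_⟩
        rw [mul_zero, eq_comm, Ideal.Quotient.eq_zero_iff_mem]
        have h1 : (monomial u (1 : K)) ∈ I := hI (Ideal.subset_span ⟨u, hud, hz, rfl⟩)
        have := I.mul_mem_left (C (coeff u f)) h1
        rwa [C_mul_monomial, mul_one] at this
      · have hle : Finsupp.single (⟨n - 1, by omega⟩ : Fin n) 1 ≤ u :=
          Finsupp.single_le_iff.2 (by omega)
        have hsum : Finsupp.single (⟨n - 1, by omega⟩ : Fin n) 1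
            + (u - Finsupp.single (⟨n - 1, by omega⟩ : Fin n) 1) = u :=
          add_tsub_cancel_of_le hle
        have hdeg : mdeg (u - Finsupp.single (⟨n - 1, by omega⟩ : Fin n) 1) = j := by
          have := congrArg mdeg hsum
          rw [mdeg_add, mdeg_single, hud] at this; omega
        refine ⟨Ideal.Quotient.mk I
          (monomial (u - Finsupp.single (⟨n - 1, by omega⟩ : Fin n) 1) (coeff u f)), ?_, ?_⟩
        · exact ⟨monomial (u - Finsupp.single (⟨n - 1, by omega⟩ : Fin n) 1) (coeff u f),
            (mem_homogeneousSubmodule _ _).2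
            (isHomogeneous_monomial _ ((mdeg_eq_degree _) ▸ hdeg)), by
              simp [Ideal.Quotient.mkₐ_eq_mk]⟩
        · rw [← map_mul, X, monomial_mul, one_mul, hsum]
    choose g hg hmul using key
    refine ⟨∑ u ∈ f.support.attach, g u u.2, Submodule.sum_mem _ (fun u _ => hg u u.2), ?_⟩
    rw [Finset.mul_sum]
    calc ∑ u ∈ f.support.attach,
          Ideal.Quotient.mk I (X (⟨n - 1, by omega⟩ : Fin n)) * g u u.2
        = ∑ u ∈ f.support.attach, Ideal.Quotient.mk I (monomial u.1 (coeff u.1 f)) := by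
          exact Finset.sum_congr rfl (fun u _ => hmul u u.2)
      _ = Ideal.Quotient.mk I f := by
          rw [← map_sum, Finset.sum_attach f.support (fun u => monomial u (coeff u f)),
            ← as_sum]
      _ = (Ideal.Quotient.mkₐ K I).toLinearMap f := by
          simp [Ideal.Quotient.mkₐ_eq_mk]
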